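/- For all real numbers x, y with 0 < y ≤ 2x one has 0 < (coth x)(coth y − csch y) ≤ 1, and moreover (coth x)(coth 2x − csch 2x) = 1. Consequently the function Ψ(x,y) = arccos((coth x)(coth y − csch y)) is well-defined with values in [0, π/2) on the domain {(x,y) : 0 < y ≤ 2x}, and on this domain Ψ is monotone increasing in its first argument and monotone decreasing in its second argument (in the weak sense: Ψ(x,y) ≤ Ψ(x',y) whenever x ≤ x', and Ψ(x,y) ≥ Ψ(x,y') whenever y ≤ y', for pairs in the domain). -/

import Mathlib

/-- The hyperbolic cotangent. -/
noncomputable def coth (x : ℝ) : ℝ := Real.cosh x / Real.sinh x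

/-- The hyperbolic cosecant. -/
noncomputable def csch (x : ℝ) : ℝ := 1 / Real.sinh x

/-- The function `Ψ(x,y) = arccos((coth x)(coth y − csch y))`. -/
noncomputable def Psi (x y : ℝ) : ℝ := Real.arccos (coth x * (coth y - csch y))

lemma tanh_pos' {x : ℝ} (hx : 0 < x) : 0 < Real.tanh x := by
  rw [Real.tanh_eq_sinh_div_cosh]
  exact div_pos (Real.sinh_pos_iff.2 hx) (Real.cosh_pos x)

lemma tanh_le' {a b : ℝ} (h : a ≤ b) : Real.tanh a ≤ Real.tanh b := by
  rw [Real.tanh_eq_sinh_div_cosh, Real.tanh_eq_sinh_div_cosh,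
    div_le_div_iff₀ (Real.cosh_pos a) (Real.cosh_pos b)]
  have h1 : Real.sinh (a - b) ≤ 0 := by
    have := Real.sinh_le_sinh.2 (show a - b ≤ 0 by linarith)
    simpa using this
  have h2 := Real.sinh_sub a b
  linarith

lemma arccos_le_arccos' {a b : ℝ} (h : a ≤ b) : Real.arccos b ≤ Real.arccos a := by
  rw [Real.arccos, Real.arccos]
  have := Real.monotone_arcsin h
  linarith

lemma key (x y : ℝ) (hx : 0 < x) (hy : 0 < y) :
    coth x * (coth y - csch y) = Real.tanh (y / 2) / Real.tanh x := by
  obtain ⟨u, rfl⟩ : ∃ u, y = 2 * u := ⟨y / 2, by ring⟩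
  have hu : 0 < u := by linarith
  have h2u : 2 * u / 2 = u := by ring
  rw [h2u]
  have hsx : Real.sinh x ≠ 0 := ne_of_gt (Real.sinh_pos_iff.2 hx)
  have hsu : Real.sinh u ≠ 0 := ne_of_gt (Real.sinh_pos_iff.2 hu)
  have hcu : Real.cosh u ≠ 0 := ne_of_gt (Real.cosh_pos _)
  have hcx : Real.cosh x ≠ 0 := ne_of_gt (Real.cosh_pos _)
  have hpyth : Real.cosh u ^ 2 = Real.sinh u ^ 2 + 1 := Real.cosh_sq _
  rw [coth, coth, csch, Real.tanh_eq_sinh_div_cosh, Real.tanh_eq_sinh_div_cosh,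
    Real.sinh_two_mul, Real.cosh_two_mul]
  have h2s : (2 : ℝ) * Real.sinh u * Real.cosh u ≠ 0 := by positivity
  field_simp
  linear_combination hpyth

theorem stmt8 :
    (∀ x y : ℝ, 0 < y → y ≤ 2 * x →
      0 < coth x * (coth y - csch y) ∧ coth x * (coth y - csch y) ≤ 1) ∧
    (∀ x : ℝ, 0 < x → coth x * (coth (2 * x) - csch (2 * x)) = 1) ∧
    (∀ x y : ℝ, 0 < y → y ≤ 2 * x → 0 ≤ Psi x y ∧ Psi x y < Real.pi / 2) ∧
    (∀ x x' y : ℝ, 0 < y → y ≤ 2 * x → y ≤ 2 * x' → x ≤ x' → Psi x y ≤ Psi x' y) ∧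
    (∀ x y y' : ℝ, 0 < y → y ≤ 2 * x → y' ≤ 2 * x → y ≤ y' → Psi x y' ≤ Psi x y) := by
  have hmain : ∀ x y : ℝ, 0 < y → y ≤ 2 * x →
      0 < coth x * (coth y - csch y) ∧ coth x * (coth y - csch y) ≤ 1 := by
    intro x y hy hxy
    have hx : 0 < x := by linarith
    rw [key x y hx hy]
    have htx : 0 < Real.tanh x := tanh_pos' hx
    have htu : 0 < Real.tanh (y / 2) := tanh_pos' (by linarith)
    constructor
    · exact div_pos htu htx
    · rw [div_le_one htx]
      exact tanh_le' (by linarith)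
  refine ⟨hmain, ?_, ?_, ?_, ?_⟩
  · intro x hx
    rw [key x (2 * x) hx (by linarith)]
    have : (2 * x) / 2 = x := by ring
    rw [this, div_self (ne_of_gt (tanh_pos' hx))]
  · intro x y hy hxy
    obtain ⟨h1, h2⟩ := hmain x y hy hxy
    exact ⟨Real.arccos_nonneg _, Real.arccos_lt_pi_div_two.2 h1⟩
  · intro x x' y hy hxy hxy' hxx'
    have hx : 0 < x := by linarith
    have hx' : 0 < x' := by linarith
    unfold Psi
    apply arccos_le_arccos'
    rw [key x y hx hy, key x' y hx' hy]
    have htu : 0 < Real.tanh (y / 2) := tanh_pos' (by linarith)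
    exact div_le_div_of_nonneg_left htu.le (tanh_pos' hx) (tanh_le' hxx')
  · intro x y y' hy hxy hxy' hyy'
    have hx : 0 < x := by linarith
    have hy' : 0 < y' := by linarith
    unfold Psi
    apply arccos_le_arccos'
    rw [key x y hx hy, key x y' hx hy']
    have htx : 0 < Real.tanh x := tanh_pos' hx
    gcongr
    exact tanh_le' (by linarith)
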